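/- Let X(s) = (X^{(ξ)}(s), s) solve dX^{(ξ)}/ds = −a(X^{(ξ)}(s), s) with speed a satisfying c̲ ≤ a ≤ c̄ and Lipschitz bound |∂_ξ a| ≤ Cε/ξ on {ξ ≥ 1}. Let X₁, X₂ be two such backward characteristics with X₁^{(ξ)}(0) = η₁ < η₂ = X₂^{(ξ)}(0), both staying in {ξ ≥ 1} on [0, T̃], and suppose (Cε/c̲) log(1 + c̲ T̃) ≤ Cκ. Then e^{−Cκ}(η₂ − η₁) ≤ X₂^{(ξ)}(s) − X₁^{(ξ)}(s) ≤ e^{Cκ}(η₂ − η₁) for all s ∈ [0, T̃]. -/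

import Mathlib

open Set

/-- Stability estimate for backward characteristics (used in Lemmas 6.1 and 6.4). -/
theorem characteristic_stability
    (a a' : ℝ → ℝ → ℝ) (cL cU C ε κ T η₁ η₂ : ℝ)
    (X₁ X₂ : ℝ → ℝ)
    (hcL : 0 < cL) (hcc : cL ≤ cU) (hC : 0 < C) (hε : 0 < ε) (hκ : 0 ≤ κ) (hT : 0 ≤ T)
    -- speed bounds on {ξ ≥ 1}
    (hab : ∀ ξ t, 1 ≤ ξ → cL ≤ a ξ t ∧ a ξ t ≤ cU)
    -- Lipschitz bound |∂_ξ a| ≤ Cε/ξ on {ξ ≥ 1}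
    (ha' : ∀ ξ t, 1 ≤ ξ →
      HasDerivAt (fun y => a y t) (a' ξ t) ξ ∧ |a' ξ t| ≤ C*ε/ξ)
    -- the two backward characteristics
    (hX₁ : ∀ s ∈ Icc (0:ℝ) T, HasDerivAt X₁ (-(a (X₁ s) s)) s)
    (hX₂ : ∀ s ∈ Icc (0:ℝ) T, HasDerivAt X₂ (-(a (X₂ s) s)) s)
    (h1 : ∀ s ∈ Icc (0:ℝ) T, 1 ≤ X₁ s)
    (h2 : ∀ s ∈ Icc (0:ℝ) T, 1 ≤ X₂ s)
    (h0₁ : X₁ 0 = η₁) (h0₂ : X₂ 0 = η₂) (hη : η₁ < η₂)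
    -- smallness:  (Cε/c̲) log(1 + c̲T̃) ≤ Cκ
    (hκT : (C*ε/cL) * Real.log (1 + cL*T) ≤ C*κ) :
    ∀ s ∈ Icc (0:ℝ) T,
      Real.exp (-(C*κ)) * (η₂ - η₁) ≤ X₂ s - X₁ s ∧
      X₂ s - X₁ s ≤ Real.exp (C*κ) * (η₂ - η₁) := by
  have hCε : 0 < C * ε := mul_pos hC hε
  -- lower barrier m s = 1 + cL*(T - s)
  set m : ℝ → ℝ := fun s => 1 + cL * (T - s) with hm
  have hm1 : ∀ s ∈ Icc (0:ℝ) T, (1:ℝ) ≤ m s := by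
    intro s hs; simp only [hm]; nlinarith [hs.2]
  have hmpos : ∀ s ∈ Icc (0:ℝ) T, (0:ℝ) < m s := fun s hs =>
    lt_of_lt_of_le one_pos (hm1 s hs)
  -- characteristics stay above the barrier
  have hbarrier : ∀ (X : ℝ → ℝ),
      (∀ s ∈ Icc (0:ℝ) T, HasDerivAt X (-(a (X s) s)) s) →
      (∀ s ∈ Icc (0:ℝ) T, 1 ≤ X s) →
      ∀ s ∈ Icc (0:ℝ) T, m s ≤ X s := by
    intro X hX hX1 s hs
    have hanti : AntitoneOn (fun s => X s + cL * s) (Icc (0:ℝ) T) := by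
      apply antitoneOn_of_deriv_nonpos (convex_Icc 0 T)
      · intro x hx
        exact ((hX x hx).continuousAt.continuousWithinAt.add
          ((continuous_const.mul continuous_id).continuousAt.continuousWithinAt))
      · intro x hx
        rw [interior_Icc] at hx
        have hx' : x ∈ Icc (0:ℝ) T := ⟨le_of_lt hx.1, le_of_lt hx.2⟩
        exact ((hX x hx').add ((hasDerivAt_id x).const_mul cL)).differentiableAt.differentiableWithinAt
      · intro x hx
        rw [interior_Icc] at hx
        have hx' : x ∈ Icc (0:ℝ) T := ⟨le_of_lt hx.1, le_of_lt hx.2⟩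
        have hd : HasDerivAt (fun s => X s + cL * s) (-(a (X x) x) + cL * 1) x :=
          (hX x hx').add ((hasDerivAt_id x).const_mul cL)
        rw [hd.deriv]
        have := (hab (X x) x (hX1 x hx')).1
        linarith
    have hTm : T ∈ Icc (0:ℝ) T := ⟨hT, le_refl T⟩
    have hord : X T + cL * T ≤ X s + cL * s := hanti hs hTm hs.2
    have h1T := hX1 T hTm
    simp only [hm]
    nlinarith
  have hX₁low := hbarrier X₁ hX₁ h1
  have hX₂low := hbarrier X₂ hX₂ h2
  -- Lipschitz estimate from the mean value inequality
  have hLip : ∀ s ∈ Icc (0:ℝ) T,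
      |a (X₁ s) s - a (X₂ s) s| ≤ C * ε / m s * |X₁ s - X₂ s| := by
    intro s hs
    have hset : ∀ y ∈ Ici (m s), HasDerivWithinAt (fun z => a z s) (a' y s) (Ici (m s)) y := by
      intro y hy
      have hy1 : (1:ℝ) ≤ y := le_trans (hm1 s hs) hy
      exact (ha' y s hy1).1.hasDerivWithinAt
    have hbd : ∀ y ∈ Ici (m s), ‖a' y s‖ ≤ C * ε / m s := by
      intro y hy
      have hy1 : (1:ℝ) ≤ y := le_trans (hm1 s hs) hy
      have h := (ha' y s hy1).2
      have : C * ε / y ≤ C * ε / m s :=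
        div_le_div_of_nonneg_left (le_of_lt hCε) (hmpos s hs) hy
      calc ‖a' y s‖ = |a' y s| := rfl
        _ ≤ C * ε / y := h
        _ ≤ C * ε / m s := this
    have := Convex.norm_image_sub_le_of_norm_hasDerivWithin_le hset hbd
      (convex_Ici (m s)) (hX₂low s hs) (hX₁low s hs)
    simpa [Real.norm_eq_abs] using this
  -- rate function
  set L : ℝ → ℝ := fun s => C * ε / m s with hL
  have hLnonneg : ∀ s ∈ Icc (0:ℝ) T, 0 ≤ L s := fun s hs =>
    le_of_lt (div_pos hCε (hmpos s hs))
  -- integral of the rate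
  set F : ℝ → ℝ := fun s =>
    (C * ε / cL) * (Real.log (1 + cL * T) - Real.log (1 + cL * (T - s))) with hF
  have hFderiv : ∀ s ∈ Icc (0:ℝ) T, HasDerivAt F (L s) s := by
    intro s hs
    have hmne : m s ≠ 0 := ne_of_gt (hmpos s hs)
    have hinner : HasDerivAt (fun x : ℝ => 1 + cL * (T - x)) (-cL) s := by
      have : HasDerivAt (fun x : ℝ => T - x) (-1) s := by
        simpa using (hasDerivAt_id s).const_sub T
      simpa [mul_comm] using (this.const_mul cL).const_add 1
    have hlog : HasDerivAt (fun x : ℝ => Real.log (1 + cL * (T - x)))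
        (-cL / m s) s := hinner.log hmne
    have : HasDerivAt F ((C * ε / cL) * (0 - (-cL / m s))) s :=
      ((hasDerivAt_const s (Real.log (1 + cL * T))).sub hlog).const_mul (C * ε / cL)
    convert this using 1
    rw [show L s = C * ε / m s from rfl]
    field_simp
    ring
  have hF0 : F 0 = 0 := by simp [hF]
  have hFbounds : ∀ s ∈ Icc (0:ℝ) T, 0 ≤ F s ∧ F s ≤ C * κ := by
    intro s hs
    have h1s : (0:ℝ) < 1 + cL * (T - s) := hmpos s hs
    have h1T : (0:ℝ) < 1 + cL * T := by nlinarith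
    have hlogle : Real.log (1 + cL * (T - s)) ≤ Real.log (1 + cL * T) := by
      apply Real.log_le_log h1s; nlinarith [hs.1]
    have hlognn : 0 ≤ Real.log (1 + cL * (T - s)) := Real.log_nonneg (hm1 s hs)
    have hcoef : 0 ≤ C * ε / cL := le_of_lt (div_pos hCε hcL)
    constructor
    · exact mul_nonneg hcoef (by linarith)
    · calc F s ≤ (C * ε / cL) * Real.log (1 + cL * T) := by
            apply mul_le_mul_of_nonneg_left _ hcoef; linarith
        _ ≤ C * κ := hκT
  -- the squared difference and the two monotone functions
  set D : ℝ → ℝ := fun s => X₂ s - X₁ s with hDdef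
  have hDderiv : ∀ s ∈ Icc (0:ℝ) T,
      HasDerivAt D (a (X₁ s) s - a (X₂ s) s) s := by
    intro s hs
    have h : HasDerivAt (fun y => X₂ y - X₁ y) _ s := (hX₂ s hs).sub (hX₁ s hs)
    convert h using 1
    ring
  have hkey : ∀ s ∈ Icc (0:ℝ) T,
      |D s * (a (X₁ s) s - a (X₂ s) s)| ≤ L s * (D s)^2 := by
    intro s hs
    have h := hLip s hs
    have habs : |X₁ s - X₂ s| = |D s| := by
      rw [hDdef]; rw [abs_sub_comm]
    rw [habs] at h
    calc |D s * (a (X₁ s) s - a (X₂ s) s)|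
        = |D s| * |a (X₁ s) s - a (X₂ s) s| := abs_mul _ _
      _ ≤ |D s| * (L s * |D s|) := by
          apply mul_le_mul_of_nonneg_left h (abs_nonneg _)
      _ = L s * (D s)^2 := by rw [← sq_abs]; ring
  -- monotone function: G₊ s = D s ^ 2 * exp (2 * F s)
  have hGp : MonotoneOn (fun s => (D s)^2 * Real.exp (2 * F s)) (Icc (0:ℝ) T) := by
    have hder : ∀ s ∈ Icc (0:ℝ) T, HasDerivAt (fun s => (D s)^2 * Real.exp (2 * F s))
        ((2 * D s * (a (X₁ s) s - a (X₂ s) s)) * Real.exp (2 * F s)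
          + (D s)^2 * (Real.exp (2 * F s) * (2 * L s))) s := by
      intro s hs
      have hsq : HasDerivAt (fun s => (D s)^2) (2 * D s * (a (X₁ s) s - a (X₂ s) s)) s := by
        have h : HasDerivAt (fun y => D y * D y) _ s := (hDderiv s hs).mul (hDderiv s hs)
        simp only [pow_two]
        convert h using 1
        ring
      have hexp : HasDerivAt (fun s => Real.exp (2 * F s))
          (Real.exp (2 * F s) * (2 * L s)) s :=
        HasDerivAt.exp ((hFderiv s hs).const_mul 2)
      exact hsq.mul hexp
    apply monotoneOn_of_deriv_nonneg (convex_Icc 0 T)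
    · intro x hx; exact (hder x hx).continuousAt.continuousWithinAt
    · intro x hx
      rw [interior_Icc] at hx
      exact (hder x ⟨le_of_lt hx.1, le_of_lt hx.2⟩).differentiableAt.differentiableWithinAt
    · intro x hx
      rw [interior_Icc] at hx
      have hx' : x ∈ Icc (0:ℝ) T := ⟨le_of_lt hx.1, le_of_lt hx.2⟩
      rw [(hder x hx').deriv]
      have hk := hkey x hx'
      have hexp : 0 < Real.exp (2 * F x) := Real.exp_pos _
      have : -(L x * (D x)^2) ≤ D x * (a (X₁ x) x - a (X₂ x) x) :=
        neg_le_of_abs_le hk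
      nlinarith
  -- antitone function: G₋ s = D s ^ 2 * exp (-(2 * F s))
  have hGm : AntitoneOn (fun s => (D s)^2 * Real.exp (-(2 * F s))) (Icc (0:ℝ) T) := by
    have hder : ∀ s ∈ Icc (0:ℝ) T, HasDerivAt (fun s => (D s)^2 * Real.exp (-(2 * F s)))
        ((2 * D s * (a (X₁ s) s - a (X₂ s) s)) * Real.exp (-(2 * F s))
          + (D s)^2 * (Real.exp (-(2 * F s)) * (-(2 * L s)))) s := by
      intro s hs
      have hsq : HasDerivAt (fun s => (D s)^2) (2 * D s * (a (X₁ s) s - a (X₂ s) s)) s := by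
        have h : HasDerivAt (fun y => D y * D y) _ s := (hDderiv s hs).mul (hDderiv s hs)
        simp only [pow_two]
        convert h using 1
        ring
      have hexp : HasDerivAt (fun s => Real.exp (-(2 * F s)))
          (Real.exp (-(2 * F s)) * (-(2 * L s))) s :=
        HasDerivAt.exp (((hFderiv s hs).const_mul 2).neg)
      exact hsq.mul hexp
    apply antitoneOn_of_deriv_nonpos (convex_Icc 0 T)
    · intro x hx; exact (hder x hx).continuousAt.continuousWithinAt
    · intro x hx
      rw [interior_Icc] at hx
      exact (hder x ⟨le_of_lt hx.1, le_of_lt hx.2⟩).differentiableAt.differentiableWithinAt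
    · intro x hx
      rw [interior_Icc] at hx
      have hx' : x ∈ Icc (0:ℝ) T := ⟨le_of_lt hx.1, le_of_lt hx.2⟩
      rw [(hder x hx').deriv]
      have hk := hkey x hx'
      have hexp : 0 < Real.exp (-(2 * F x)) := Real.exp_pos _
      have : D x * (a (X₁ x) x - a (X₂ x) x) ≤ L x * (D x)^2 :=
        le_of_abs_le hk
      nlinarith
  have h0T : (0:ℝ) ∈ Icc (0:ℝ) T := ⟨le_refl 0, hT⟩
  have hD0 : D 0 = η₂ - η₁ := by simp [hDdef, h0₁, h0₂]
  have hD0pos : 0 < D 0 := by rw [hD0]; linarith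
  -- squared bounds
  have hlowsq : ∀ s ∈ Icc (0:ℝ) T, (η₂ - η₁)^2 ≤ (D s)^2 * Real.exp (2 * F s) := by
    intro s hs
    have := hGp h0T hs hs.1
    simpa [hF0, hD0] using this
  have hupsq : ∀ s ∈ Icc (0:ℝ) T, (D s)^2 * Real.exp (-(2 * F s)) ≤ (η₂ - η₁)^2 := by
    intro s hs
    have := hGm h0T hs hs.1
    simpa [hF0, hD0] using this
  -- positivity of D on [0, T]
  have hDpos : ∀ s ∈ Icc (0:ℝ) T, 0 < D s := by
    intro s hs
    by_contra hcon
    push_neg at hcon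
    have hDne : ∀ t ∈ Icc (0:ℝ) T, D t ≠ 0 := by
      intro t ht h0
      have := hlowsq t ht
      rw [h0] at this
      simp at this
      nlinarith
    have hDs : D s < 0 := lt_of_le_of_ne hcon (hDne s hs)
    have hcont : ContinuousOn D (Icc (0:ℝ) s) := by
      intro x hx
      have hx' : x ∈ Icc (0:ℝ) T := ⟨hx.1, le_trans hx.2 hs.2⟩
      exact (hDderiv x hx').continuousAt.continuousWithinAt
    have hiv := intermediate_value_Icc' hs.1 hcont
    have h0mem : (0:ℝ) ∈ Icc (D s) (D 0) := ⟨le_of_lt hDs, le_of_lt hD0pos⟩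
    obtain ⟨t, ht, hDt⟩ := hiv h0mem
    exact hDne t ⟨ht.1, le_trans ht.2 hs.2⟩ hDt
  -- conclusion
  intro s hs
  have hFb := hFbounds s hs
  have hDp := hDpos s hs
  have hexpF : 0 < Real.exp (F s) := Real.exp_pos _
  have hexp2F : Real.exp (2 * F s) = (Real.exp (F s))^2 := by
    rw [← Real.exp_nat_mul]; push_cast; ring_nf
  have hexpm2F : Real.exp (-(2 * F s)) = (Real.exp (-(F s)))^2 := by
    rw [← Real.exp_nat_mul]; push_cast; ring_nf
  constructor
  · -- lower bound
    have hsq : ((η₂ - η₁) * Real.exp (-(F s)))^2 ≤ (D s)^2 := by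
      have h := hlowsq s hs
      have hem : Real.exp (-(F s)) = (Real.exp (F s))⁻¹ := by
        rw [Real.exp_neg]
      have : (η₂ - η₁)^2 * (Real.exp (-(F s)))^2 ≤
          (D s)^2 * Real.exp (2 * F s) * (Real.exp (-(F s)))^2 := by
        apply mul_le_mul_of_nonneg_right h (sq_nonneg _)
      calc ((η₂ - η₁) * Real.exp (-(F s)))^2
          = (η₂ - η₁)^2 * (Real.exp (-(F s)))^2 := by ring
        _ ≤ (D s)^2 * Real.exp (2 * F s) * (Real.exp (-(F s)))^2 := this
        _ = (D s)^2 := by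
            rw [hexp2F, hem]
            field_simp
    have hkpos : 0 < (η₂ - η₁) * Real.exp (-(F s)) :=
      mul_pos (by linarith) (Real.exp_pos _)
    have hstep : (η₂ - η₁) * Real.exp (-(F s)) ≤ D s := by nlinarith
    have hmono : Real.exp (-(C * κ)) ≤ Real.exp (-(F s)) :=
      Real.exp_le_exp.mpr (by linarith [hFb.2])
    calc Real.exp (-(C * κ)) * (η₂ - η₁)
        ≤ Real.exp (-(F s)) * (η₂ - η₁) := by
          apply mul_le_mul_of_nonneg_right hmono (by linarith)
      _ = (η₂ - η₁) * Real.exp (-(F s)) := by ring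
      _ ≤ D s := hstep
  · -- upper bound
    have hsq : (D s)^2 ≤ ((η₂ - η₁) * Real.exp (F s))^2 := by
      have h := hupsq s hs
      have : (D s)^2 * Real.exp (-(2 * F s)) * (Real.exp (F s))^2 ≤
          (η₂ - η₁)^2 * (Real.exp (F s))^2 := by
        apply mul_le_mul_of_nonneg_right h (sq_nonneg _)
      calc (D s)^2
          = (D s)^2 * Real.exp (-(2 * F s)) * (Real.exp (F s))^2 := by
            rw [hexpm2F, Real.exp_neg]
            field_simp
        _ ≤ (η₂ - η₁)^2 * (Real.exp (F s))^2 := this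
        _ = ((η₂ - η₁) * Real.exp (F s))^2 := by ring
    have hkpos : 0 < (η₂ - η₁) * Real.exp (F s) :=
      mul_pos (by linarith) (Real.exp_pos _)
    have hstep : D s ≤ (η₂ - η₁) * Real.exp (F s) := by nlinarith
    have hmono : Real.exp (F s) ≤ Real.exp (C * κ) :=
      Real.exp_le_exp.mpr hFb.2
    calc D s ≤ (η₂ - η₁) * Real.exp (F s) := hstep
      _ ≤ (η₂ - η₁) * Real.exp (C * κ) := by
          apply mul_le_mul_of_nonneg_left hmono (by linarith)
      _ = Real.exp (C * κ) * (η₂ - η₁) := by ring
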